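/- arXiv:1809.09932 — 4 statements merged into one kernel-verified Lean document; each statement's English description precedes it below -/
import Mathlib

section
/- Let n ≥ 2 be a natural number. If α, β, γ, δ are natural numbers with α ≤ n − 2, β ≤ n − 2, and α + βn + γ(n² − n) + δ(n² − 1) = 3n² − 2n − 2, then (α, β, γ, δ) equals (0, n−2, 0, 2) or (n−2, 0, 3, 0). -/
set_option maxHeartbeats 1000000 in
theorem stmt_2 (n α β γ δ : ℕ) (hn : 2 ≤ n)
    (hα : α ≤ n - 2) (hβ : β ≤ n - 2)
    (h : α + β * n + γ * (n ^ 2 - n) + δ * (n ^ 2 - 1) = 3 * n ^ 2 - 2 * n - 2) :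
    (α, β, γ, δ) = (0, n - 2, 0, 2) ∨ (α, β, γ, δ) = (n - 2, 0, 3, 0) := by
  obtain ⟨k, rfl⟩ : ∃ k, n = k + 2 := ⟨n - 2, by omega⟩
  have hα' : α ≤ k := by omega
  have hβ' : β ≤ k := by omega
  have hsq : (k + 2) ^ 2 = k * k + 4 * k + 4 := by ring
  have e1 : (k + 2) ^ 2 - (k + 2) = k * k + 3 * k + 2 := by omega
  have e2 : (k + 2) ^ 2 - 1 = k * k + 4 * k + 3 := by omega
  have e3 : 3 * (k + 2) ^ 2 - 2 * (k + 2) - 2 = 3 * (k * k) + 10 * k + 6 := by omega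
  rw [e1, e2, e3] at h
  have e4 : β * (k + 2) = β * k + 2 * β := by ring
  have e5 : γ * (k * k + 3 * k + 2) = γ * (k * k) + 3 * (γ * k) + 2 * γ := by ring
  have e6 : δ * (k * k + 4 * k + 3) = δ * (k * k) + 4 * (δ * k) + 3 * δ := by ring
  rw [e4, e5, e6] at h
  have hbk : β * k ≤ k * k := Nat.mul_le_mul_right k hβ'
  have nn1 : 0 ≤ γ * (k * k) := Nat.zero_le _
  have nn2 : 0 ≤ γ * k := Nat.zero_le _
  have nn3 : 0 ≤ β * k := Nat.zero_le _
  have nn4 : 0 ≤ k * k := Nat.zero_le _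
  have nn5 : 0 ≤ k := Nat.zero_le _
  have nn6 : 0 ≤ α := Nat.zero_le _
  have nn7 : 0 ≤ β := Nat.zero_le _
  have nn8 : 0 ≤ γ := Nat.zero_le _
  have hδ2 : δ ≤ 2 := by
    by_contra hd
    have hd3 : 3 ≤ δ := by omega
    have f1 : 3 * (k * k) ≤ δ * (k * k) := Nat.mul_le_mul_right _ hd3
    have f2 : 3 * k ≤ δ * k := Nat.mul_le_mul_right _ hd3
    linarith
  have hγ3 : γ ≤ 3 := by
    by_contra hg
    have hg4 : 4 ≤ γ := by omega
    have f1 : 4 * (k * k) ≤ γ * (k * k) := Nat.mul_le_mul_right _ hg4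
    have f2 : 4 * k ≤ γ * k := Nat.mul_le_mul_right _ hg4
    have f3 : 0 ≤ δ * (k * k) := Nat.zero_le _
    have f4 : 0 ≤ δ * k := Nat.zero_le _
    linarith
  have hk2 : k + 2 - 2 = k := by omega
  rw [hk2]
  interval_cases δ <;> interval_cases γ
  · exfalso; linarith
  · exfalso; linarith
  · exfalso; linarith
  · -- δ = 0, γ = 3
    right
    have hb : β = 0 := by
      by_contra hb
      have h1 : 1 ≤ β := Nat.pos_of_ne_zero hb
      have h2 : 1 * k ≤ β * k := Nat.mul_le_mul_right _ h1
      linarith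
    subst hb
    have ha : α = k := by linarith
    subst ha
    rfl
  · exfalso; linarith
  · exfalso; linarith
  · exfalso; linarith
  · exfalso; linarith
  · -- δ = 2, γ = 0
    left
    have hb : β = k := by
      rcases Nat.lt_or_ge β k with hlt | hge
      · exfalso
        have h2 : β * k + k ≤ k * k := by
          calc β * k + k = (β + 1) * k := by ring
            _ ≤ k * k := Nat.mul_le_mul_right k (by omega)
        linarith
      · omega
    subst hb
    have ha : α = 0 := by linarith
    subst ha
    rfl
  · exfalso; linarith
  · exfalso; linarith
  · exfalso; linarith
end

section
/- Let n ≥ 2 and L = { (x₁,x₂,x₃,x₄) ∈ ℤ⁴ : x₁ + n·x₂ + (n²−n)·x₃ + (n²−1)·x₄ = 0 }. Suppose u = (2−n, n−2, −3, 2) is written as a semiconformal decomposition u = v +_sc w with v, w ∈ L, where the first coordinates of both v and w are ≤ 0 and the second coordinates of both v and w are ≥ 0. Then v = 0 or w = 0. -/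
set_option maxHeartbeats 1000000 in
theorem stmt_9 (n : ℕ) (hn : 2 ≤ n) (v w : Fin 4 → ℤ)
    (hv : v 0 + n * v 1 + ((n : ℤ) ^ 2 - n) * v 2 + ((n : ℤ) ^ 2 - 1) * v 3 = 0)
    (hw : w 0 + n * w 1 + ((n : ℤ) ^ 2 - n) * w 2 + ((n : ℤ) ^ 2 - 1) * w 3 = 0)
    (hsum : (![2 - (n : ℤ), (n : ℤ) - 2, -3, 2] : Fin 4 → ℤ) = v + w)
    (hsc : ∀ i, (0 < v i → 0 ≤ w i) ∧ (w i < 0 → v i ≤ 0))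
    (hv1 : v 0 ≤ 0) (hw1 : w 0 ≤ 0) (hv2 : 0 ≤ v 1) (hw2 : 0 ≤ w 1) :
    v = 0 ∨ w = 0 := by
  have hm : (2:ℤ) ≤ (n:ℤ) := by exact_mod_cast hn
  set m : ℤ := (n : ℤ) with hmdef
  have e0 : v 0 + w 0 = 2 - m := by
    have h := congrFun hsum 0; simp at h; linarith
  have e1 : v 1 + w 1 = m - 2 := by
    have h := congrFun hsum 1; simp at h; linarith
  have e2 : v 2 + w 2 = -3 := by
    have h := congrFun hsum 2; simp at h; linarith
  have e3 : v 3 + w 3 = 2 := by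
    have h := congrFun hsum 3; simp at h; linarith
  have hc : v 2 ≤ 0 := by
    by_contra h
    push_neg at h
    have := (hsc 2).1 h
    linarith
  have hd2 : v 3 ≤ 2 := by
    by_contra h
    push_neg at h
    have := (hsc 3).1 (by linarith)
    linarith
  have hmm : (0:ℤ) ≤ m ^ 2 - m := by nlinarith
  have hm1 : (0:ℤ) ≤ m ^ 2 - 1 := by nlinarith
  have hd0 : 0 ≤ v 3 := by
    by_contra h
    push_neg at h
    nlinarith [mul_nonneg (by linarith : (0:ℤ) ≤ m) hw2,
               mul_nonneg hmm (by linarith : (0:ℤ) ≤ w 2 + 3),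
               mul_nonneg hm1 (by linarith : (0:ℤ) ≤ w 3 - 3)]
  have hcase : v 3 = 0 ∨ v 3 = 1 ∨ v 3 = 2 := by omega
  rcases hcase with h3 | h3 | h3
  · -- v 3 = 0, show v = 0
    left
    have hr3 : w 2 ≤ -3 := by
      by_contra h
      push_neg at h
      nlinarith [mul_nonneg (by linarith : (0:ℤ) ≤ m) hw2,
                 mul_nonneg hmm (by linarith : (0:ℤ) ≤ w 2 + 2),
                 mul_nonneg hm1 (by linarith : (0:ℤ) ≤ w 3 - 2)]
    have hc0 : v 2 = 0 := by linarith
    have hb0 : v 1 = 0 := by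
      by_contra h
      have hb1 : 1 ≤ v 1 := by omega
      nlinarith [mul_nonneg (by linarith : (0:ℤ) ≤ m) (by linarith : (0:ℤ) ≤ v 1 - 1)]
    have ha0 : v 0 = 0 := by
      rw [h3, hc0, hb0] at hv
      linarith
    funext i
    fin_cases i <;> simp [ha0, hb0, hc0, h3]
  · -- v 3 = 1, contradiction
    exfalso
    have hcle : v 2 ≤ -2 := by
      by_contra h
      push_neg at h
      nlinarith [mul_nonneg (by linarith : (0:ℤ) ≤ m) hv2,
                 mul_nonneg hmm (by linarith : (0:ℤ) ≤ v 2 + 1)]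
    nlinarith [mul_nonneg hmm (by linarith : (0:ℤ) ≤ -2 - v 2),
               mul_nonneg (by linarith : (0:ℤ) ≤ m) (by linarith : (0:ℤ) ≤ m - 2 - v 1)]
  · -- v 3 = 2, show w = 0
    right
    rw [h3] at hv
    have hs0 : w 3 = 0 := by linarith
    rw [hs0] at hw
    have hr0 : w 2 ≤ 0 := by
      by_contra h
      push_neg at h
      nlinarith [mul_nonneg (by linarith : (0:ℤ) ≤ m) hw2,
                 mul_nonneg hmm (by linarith : (0:ℤ) ≤ w 2 - 1)]
    have hr : w 2 = 0 := by
      by_contra h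
      have : w 2 ≤ -1 := by omega
      -- then v 2 = -3 - w 2 ≥ -2, contradiction via A_v
      nlinarith [mul_nonneg (by linarith : (0:ℤ) ≤ m) hv2,
                 mul_nonneg hmm (by linarith : (0:ℤ) ≤ v 2 + 2)]
    have hq0 : w 1 = 0 := by
      by_contra h
      have : 1 ≤ w 1 := by omega
      nlinarith [mul_nonneg (by linarith : (0:ℤ) ≤ m) (by linarith : (0:ℤ) ≤ w 1 - 1)]
    have hp0 : w 0 = 0 := by
      rw [hr, hq0] at hw
      linarith
    funext i
    fin_cases i <;> simp [hp0, hq0, hr, hs0]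
end

section
/- Let n ≥ 2 and L = { x ∈ ℤ⁴ : x₁ + n·x₂ + (n²−n)·x₃ + (n²−1)·x₄ = 0 }. Consider the n × 4 integer matrix u whose first n−2 rows are (1,−1,−1,1), whose (n−1)-st row is (0,0,n+1,−n), and whose n-th row is (2−n, n−2, −3, 2). Suppose u = v + w where v, w are n × 4 integer matrices each of whose rows lies in L, each of whose columns sums to zero, and such that for every entry (i,j): v(i,j) > 0 implies w(i,j) ≥ 0 and w(i,j) < 0 implies v(i,j) ≤ 0. Then v = 0 or w = 0. -/
set_option maxHeartbeats 1000000 in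
theorem stmt_11 (n : ℕ) (hn : 2 ≤ n)
    (L : Set (Fin 4 → ℤ))
    (hL : L = {x | x 0 + n * x 1 + ((n : ℤ) ^ 2 - n) * x 2 + ((n : ℤ) ^ 2 - 1) * x 3 = 0})
    (u v w : Fin n → Fin 4 → ℤ)
    (hu : ∀ i : Fin n,
      (((i : ℕ) < n - 2) → u i = ![1, -1, -1, 1]) ∧
      ((i : ℕ) = n - 2 → u i = ![0, 0, (n : ℤ) + 1, -(n : ℤ)]) ∧
      ((i : ℕ) = n - 1 → u i = ![2 - (n : ℤ), (n : ℤ) - 2, -3, 2]))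
    (hvL : ∀ i, v i ∈ L) (hwL : ∀ i, w i ∈ L)
    (hvcol : ∀ j, ∑ i, v i j = 0) (hwcol : ∀ j, ∑ i, w i j = 0)
    (hsum : u = v + w)
    (hsc : ∀ i j, (0 < v i j → 0 ≤ w i j) ∧ (w i j < 0 → v i j ≤ 0)) :
    v = 0 ∨ w = 0 := by
  subst hL
  obtain ⟨m, rfl⟩ : ∃ m, n = m + 2 := ⟨n - 2, by omega⟩
  clear hn
  set M : ℤ := (m : ℤ) with hMdef
  have hM0 : 0 ≤ M := Int.natCast_nonneg m
  -- named indices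
  set p : Fin (m+2) := ⟨m, by omega⟩ with hp_def
  set q : Fin (m+2) := ⟨m+1, by omega⟩ with hq_def
  set e : Fin m → Fin (m+2) := fun i => ⟨i.val, by omega⟩ with he_def
  -- w in terms of u, v
  have hw : ∀ i j, w i j = u i j - v i j := by
    intro i j
    have : u i j = v i j + w i j := by rw [hsum]; rfl
    omega
  -- entrywise bound
  have hbd : ∀ i j, v i j ≤ max (u i j) 0 := by
    intro i j
    have h2 := (hsc i j).2
    have h3 := hw i j
    have hm1 := le_max_left (u i j) (0:ℤ)
    have hm2 := le_max_right (u i j) (0:ℤ)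
    by_contra h
    push_neg at h
    have : w i j < 0 := by omega
    have := h2 this
    omega
  -- u values on rows
  have hu_top : ∀ i : Fin m, u (e i) = ![1, -1, -1, 1] := by
    intro i
    refine (hu (e i)).1 ?_
    have := i.isLt
    simp only [he_def]
    omega
  have hu_p : u p = ![0, 0, ((m:ℤ)+2) + 1, -((m:ℤ)+2)] := by
    have := (hu p).2.1 (by simp only [hp_def]; omega)
    rw [this]
    norm_num
  have hu_q : u q = ![2 - ((m:ℤ)+2), ((m:ℤ)+2) - 2, -3, 2] := by
    have := (hu q).2.2 (by simp only [hq_def]; omega)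
    rw [this]
    norm_num
  -- bounds for top rows
  have htop0 : ∀ i : Fin m, v (e i) 0 ≤ 1 := by
    intro i; have h := hbd (e i) 0; rw [hu_top i] at h; simpa using h
  have htop1 : ∀ i : Fin m, v (e i) 1 ≤ 0 := by
    intro i; have h := hbd (e i) 1; rw [hu_top i] at h; simpa using h
  have htop2 : ∀ i : Fin m, v (e i) 2 ≤ 0 := by
    intro i; have h := hbd (e i) 2; rw [hu_top i] at h; simpa using h
  have htop3 : ∀ i : Fin m, v (e i) 3 ≤ 1 := by
    intro i; have h := hbd (e i) 3; rw [hu_top i] at h; simpa using h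
  -- bounds for row p
  have hp0 : v p 0 ≤ 0 := by
    have h := hbd p 0; rw [hu_p] at h; simpa using h
  have hp1 : v p 1 ≤ 0 := by
    have h := hbd p 1; rw [hu_p] at h; simpa using h
  have hp3 : v p 3 ≤ 0 := by
    have h := hbd p 3; rw [hu_p] at h
    simp only [Matrix.cons_val_three, Matrix.tail_cons, Matrix.head_cons] at h
    have : max (-((m:ℤ)+2)) 0 = 0 := max_eq_right (by linarith)
    rw [this] at h; exact h
  -- bounds for row q
  have hq0 : v q 0 ≤ 0 := by
    have h := hbd q 0; rw [hu_q] at h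
    simp only [Matrix.cons_val_zero] at h
    have : max (2 - ((m:ℤ)+2)) 0 = 0 := max_eq_right (by linarith)
    rw [this] at h; exact h
  have hq1 : v q 1 ≤ M := by
    have h := hbd q 1; rw [hu_q] at h
    simp only [Matrix.cons_val_one, Matrix.head_cons, Matrix.cons_val_zero] at h
    have : max (((m:ℤ)+2) - 2) 0 = M := by rw [max_eq_left (by linarith)]; ring
    rw [this] at h; exact h
  have hq2 : v q 2 ≤ 0 := by
    have h := hbd q 2; rw [hu_q] at h; simpa using h
  have hq3 : v q 3 ≤ 2 := by
    have h := hbd q 3; rw [hu_q] at h; simpa using h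
  -- row equations
  have hrow : ∀ i, v i 0 + (M+2) * v i 1 + ((M+2)^2 - (M+2)) * v i 2
      + ((M+2)^2 - 1) * v i 3 = 0 := by
    intro i
    have h := hvL i
    simp only [Set.mem_setOf_eq] at h
    push_cast at h
    linarith
  -- sum splitting
  have hsplit : ∀ f : Fin (m+2) → ℤ, ∑ i, f i = (∑ i : Fin m, f (e i)) + f p + f q := by
    intro f
    rw [Fin.sum_univ_castSucc, Fin.sum_univ_castSucc]
    rfl
  -- cover
  have hcover : ∀ i : Fin (m+2), (∃ i' : Fin m, i = e i') ∨ i = p ∨ i = q := by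
    intro i
    have hi := i.isLt
    rcases (show i.val < m ∨ i.val = m ∨ i.val = m + 1 by omega) with h | h | h
    · exact Or.inl ⟨⟨i.val, h⟩, by apply Fin.ext; simp [he_def]⟩
    · exact Or.inr (Or.inl (by apply Fin.ext; simp [hp_def, h]))
    · exact Or.inr (Or.inr (by apply Fin.ext; simp [hq_def, h]))
  -- Step 1: classification of top rows
  have hP1 : ∀ i : Fin m, v (e i) 3 = 1 ∨
      (v (e i) 0 = 0 ∧ v (e i) 1 = 0 ∧ v (e i) 2 = 0 ∧ v (e i) 3 = 0) := by
    intro i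
    have hM1 : 1 ≤ M := by
      have := i.isLt
      simp only [hMdef]
      exact_mod_cast Nat.one_le_iff_ne_zero.mpr (by omega)
    have heq := hrow (e i)
    have ha := htop0 i; have hb := htop1 i; have hc := htop2 i; have hd := htop3 i
    rcases (show v (e i) 3 = 1 ∨ v (e i) 3 ≤ 0 by omega) with h | h
    · exact Or.inl h
    · right
      have e1 : v (e i) 0 = (M+2) * (-(v (e i) 1)) + ((M+2)*(M+1)) * (-(v (e i) 2))
          + ((M+3)*(M+1)) * (-(v (e i) 3)) := by linear_combination heq
      have t2 : 0 ≤ ((M+2)*(M+1)) * (-(v (e i) 2)) :=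
        mul_nonneg (by linarith [sq_nonneg M]) (by linarith)
      have t3 : 0 ≤ ((M+3)*(M+1)) * (-(v (e i) 3)) :=
        mul_nonneg (by linarith [sq_nonneg M]) (by linarith)
      have t1 : 0 ≤ (M+2) * (-(v (e i) 1)) := mul_nonneg (by linarith) (by linarith)
      have hb0 : v (e i) 1 = 0 := by
        by_contra hcontra
        have h1 : (1:ℤ) ≤ -(v (e i) 1) := by omega
        have h2 : (M+2) * 1 ≤ (M+2) * (-(v (e i) 1)) :=
          mul_le_mul_of_nonneg_left h1 (by linarith)
        linarith
      have hc0 : v (e i) 2 = 0 := by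
        by_contra hcontra
        have h1 : (1:ℤ) ≤ -(v (e i) 2) := by omega
        have h2 : ((M+2)*(M+1)) * 1 ≤ ((M+2)*(M+1)) * (-(v (e i) 2)) :=
          mul_le_mul_of_nonneg_left h1 (by linarith [sq_nonneg M])
        linarith [sq_nonneg M]
      have hd0 : v (e i) 3 = 0 := by
        by_contra hcontra
        have h1 : (1:ℤ) ≤ -(v (e i) 3) := by omega
        have h2 : ((M+3)*(M+1)) * 1 ≤ ((M+3)*(M+1)) * (-(v (e i) 3)) :=
          mul_le_mul_of_nonneg_left h1 (by linarith [sq_nonneg M])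
        linarith [sq_nonneg M]
      have ha0 : v (e i) 0 = 0 := by
        rw [hb0, hc0, hd0] at e1; linarith
      exact ⟨ha0, hb0, hc0, hd0⟩
  have hD01 : ∀ i : Fin m, v (e i) 3 = 0 ∨ v (e i) 3 = 1 := by
    intro i; rcases hP1 i with h | h
    · exact Or.inr h
    · exact Or.inl h.2.2.2
  -- Step 2: column 0 forces a_i = d_i
  have hP3 : ∀ i : Fin m, v (e i) 0 = v (e i) 3 ∨ v (e i) 0 ≤ -(M+1) := by
    intro i
    rcases hP1 i with h | h
    · have heq := hrow (e i)
      rw [h] at heq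
      have ha := htop0 i; have hb := htop1 i; have hc := htop2 i
      have em : v (e i) 0 = (M+2) * (-(v (e i) 1) - (M+1) * v (e i) 2) - (M+2)^2 + 1 := by
        linear_combination heq
      rcases le_or_gt (M+2) (-(v (e i) 1) - (M+1) * v (e i) 2) with hge | hlt
      · left
        have h2 : (M+2) * (M+2) ≤ (M+2) * (-(v (e i) 1) - (M+1) * v (e i) 2) :=
          mul_le_mul_of_nonneg_left hge (by linarith)
        rw [h]
        linarith [sq_nonneg M]
      · right
        have hle : -(v (e i) 1) - (M+1) * v (e i) 2 ≤ M + 1 := by omega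
        have h2 : (M+2) * (-(v (e i) 1) - (M+1) * v (e i) 2) ≤ (M+2) * (M+1) :=
          mul_le_mul_of_nonneg_left hle (by linarith)
        linarith [sq_nonneg M]
    · left; rw [h.1, h.2.2.2]
  have hcol0 : (∑ i : Fin m, v (e i) 0) + v p 0 + v q 0 = 0 := by
    have h := hvcol 0; rwa [hsplit] at h
  have hAD : ∀ i : Fin m, v (e i) 0 = v (e i) 3 := by
    by_contra hcon
    push_neg at hcon
    obtain ⟨i₀, hi₀⟩ := hcon
    have hi₀' : v (e i₀) 0 ≤ -(M+1) := (hP3 i₀).resolve_left hi₀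
    have hM1 : 1 ≤ M := by
      have := i₀.isLt
      simp only [hMdef]
      exact_mod_cast Nat.one_le_iff_ne_zero.mpr (by omega)
    have hrest : ∑ i ∈ Finset.univ.erase i₀, v (e i) 0 ≤ (m - 1 : ℕ) • (1:ℤ) := by
      have := Finset.sum_le_card_nsmul (Finset.univ.erase i₀) (fun i => v (e i) 0) 1
        (fun i _ => htop0 i)
      simpa [Finset.card_erase_of_mem, Finset.card_univ] using this
    have hsplit0 : ∑ i ∈ Finset.univ.erase i₀, v (e i) 0 + v (e i₀) 0
        = ∑ i : Fin m, v (e i) 0 :=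
      Finset.sum_erase_add _ _ (Finset.mem_univ i₀)
    have hcard : ((m - 1 : ℕ) • (1:ℤ)) = M - 1 := by
      have hm : 1 ≤ m := by rw [hMdef] at hM1; exact_mod_cast hM1
      simp only [nsmul_eq_mul, mul_one, hMdef]
      omega
    rw [hcard] at hrest
    linarith
  -- Step 3: per-row b + (M+1)c = -(M+2)d and c ≥ -d
  have hbc : ∀ i : Fin m, v (e i) 1 + (M+1) * v (e i) 2 = -(M+2) * v (e i) 3 := by
    intro i
    rcases hP1 i with h | h
    · have heq := hrow (e i)
      have ha := hAD i
      rw [h] at heq ha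
      rw [ha] at heq
      have hfac : (M+2) * (v (e i) 1 + (M+1) * v (e i) 2 + (M+2)) = 0 := by
        linear_combination heq
      have := mul_eq_zero.mp hfac
      rcases this with h' | h'
      · exfalso; linarith
      · rw [h]; linarith
    · rw [h.2.1, h.2.2.1, h.2.2.2]; ring
  have hP5 : ∀ i : Fin m, -(v (e i) 3) ≤ v (e i) 2 := by
    intro i
    rcases hP1 i with h | h
    · rw [h]
      by_contra hcon
      push_neg at hcon
      have hc2 : v (e i) 2 ≤ -2 := by omega
      have hM1 : 1 ≤ M := by
        have := i.isLt
        simp only [hMdef]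
        exact_mod_cast Nat.one_le_iff_ne_zero.mpr (by omega)
      have hb := htop1 i
      have heq := hbc i
      rw [h] at heq
      have h2 : (M+1) * 2 ≤ (M+1) * (-(v (e i) 2)) :=
        mul_le_mul_of_nonneg_left (by omega) (by linarith)
      linarith [sq_nonneg M]
    · rw [h.2.2.1, h.2.2.2]; norm_num
  -- Step 4: column 1 analysis
  set T : ℤ := ∑ i : Fin m, v (e i) 3 with hTdef
  set C : ℤ := ∑ i : Fin m, v (e i) 2 with hCdef
  have hT0 : 0 ≤ T := Finset.sum_nonneg (fun i _ => by rcases hD01 i with h | h <;> omega)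
  have hTm : T ≤ M := by
    have := Finset.sum_le_card_nsmul Finset.univ (fun i : Fin m => v (e i) 3) 1
      (fun i _ => htop3 i)
    simpa [Finset.card_univ, hMdef, hTdef] using this
  have hTC0 : 0 ≤ T + C := by
    rw [hTdef, hCdef, ← Finset.sum_add_distrib]
    exact Finset.sum_nonneg (fun i _ => by linarith [hP5 i])
  have hcol1 : (∑ i : Fin m, v (e i) 1) + v p 1 + v q 1 = 0 := by
    have h := hvcol 1; rwa [hsplit] at h
  have hsumb : ∑ i : Fin m, v (e i) 1 = -(M+2) * T - (M+1) * C := by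
    rw [hTdef, hCdef, Finset.mul_sum, Finset.mul_sum, ← Finset.sum_sub_distrib]
    exact Finset.sum_congr rfl (fun i _ => by linarith [hbc i])
  have hkey : (M+2) * T + (M+1) * C ≤ M := by
    rw [hsumb] at hcol1
    linarith [hp1, hq1]
  have hTCz : T + C = 0 := by
    by_contra hcon
    have h1 : 1 ≤ T + C := by omega
    have h2 : (M+1) * 1 ≤ (M+1) * (T + C) := mul_le_mul_of_nonneg_left h1 (by linarith)
    linarith [sq_nonneg M]
  have hci : ∀ i : Fin m, v (e i) 2 = -(v (e i) 3) := by
    have hz : ∑ i : Fin m, (v (e i) 3 + v (e i) 2) = 0 := by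
      rw [Finset.sum_add_distrib, ← hTdef, ← hCdef]; omega
    intro i
    have := (Finset.sum_eq_zero_iff_of_nonneg
      (fun i _ => by linarith [hP5 i])).mp hz i (Finset.mem_univ i)
    linarith
  have hbi : ∀ i : Fin m, v (e i) 1 = -(v (e i) 3) := by
    intro i
    have h1 := hbc i
    have h2 := hci i
    linear_combination h1 - (M+1) * h2
  -- column sums
  have hsuma : ∑ i : Fin m, v (e i) 0 = T := by
    rw [hTdef]; exact Finset.sum_congr rfl (fun i _ => hAD i)
  have hsumc : ∑ i : Fin m, v (e i) 2 = -T := by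
    rw [hTdef, ← Finset.sum_neg_distrib]
    exact Finset.sum_congr rfl (fun i _ => hci i)
  have hsumb' : ∑ i : Fin m, v (e i) 1 = -T := by
    rw [hTdef, ← Finset.sum_neg_distrib]
    exact Finset.sum_congr rfl (fun i _ => hbi i)
  have hsumd : ∑ i : Fin m, v (e i) 3 = T := rfl
  have hA : v p 0 + v q 0 = -T := by rw [hsuma] at hcol0; linarith
  have hB : v p 1 + v q 1 = T := by rw [hsumb'] at hcol1; linarith
  have hC2 : v p 2 + v q 2 = T := by
    have h := hvcol 2; rw [hsplit] at h; rw [hsumc] at h; linarith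
  have hD2 : v p 3 + v q 3 = -T := by
    have h := hvcol 3; rw [hsplit] at h; rw [hsumd] at h; linarith
  -- E analysis
  set E : ℤ := (M+2) * v q 1 + ((M+2)^2 - (M+2)) * v q 2 + ((M+2)^2 - 1) * v q 3 with hEdef
  have hrq := hrow q
  have hrp := hrow p
  have hE0 : 0 ≤ E := by rw [hEdef]; linarith [hq0]
  have hap_eq : v p 0 = E - T := by
    rw [hEdef]
    linear_combination hrp - (M+2) * hB - ((M+2)^2 - (M+2)) * hC2 - ((M+2)^2 - 1) * hD2
  have hET : E ≤ T := by linarith [hp0]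
  have hdq_lb : -T ≤ v q 3 := by linarith [hp3]
  have hβT : T ≤ v q 1 := by linarith [hp1]
  rcases (show v q 3 = 2 ∨ v q 3 = 1 ∨ v q 3 = 0 ∨ v q 3 ≤ -1 by omega) with hdq | hdq | hdq | hdq
  · -- v = u, so w = 0
    right
    have hdvd : (M+2) ∣ E + 2 := ⟨v q 1 + (M+1) * v q 2 + 2*(M+2), by
      rw [hEdef, hdq]; ring⟩
    have hle := Int.le_of_dvd (by linarith) hdvd
    have hEM : E = M := by linarith
    have hTM : T = M := by linarith
    have hβM : v q 1 = M := by linarith [hq1]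
    have hcq3 : v q 2 = -3 := by
      have h3 : (M+1) * ((M+2) * (v q 2 + 3)) = 0 := by
        rw [hEdef] at hEM
        linear_combination hEM - (M+2) * hβM - ((M+2)^2-1) * hdq
      rcases mul_eq_zero.mp h3 with h' | h'
      · exfalso; linarith
      · rcases mul_eq_zero.mp h' with h'' | h''
        · exfalso; linarith
        · linarith
    have hd1 : ∀ i : Fin m, v (e i) 3 = 1 := by
      have hz : ∑ i : Fin m, (1 - v (e i) 3) = 0 := by
        rw [Finset.sum_sub_distrib, ← hTdef, Finset.sum_const, Finset.card_univ]
        simp only [Fintype.card_fin, nsmul_eq_mul, mul_one]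
        rw [hTM, hMdef, sub_self]
      intro i
      have := (Finset.sum_eq_zero_iff_of_nonneg
        (fun i _ => by rcases hD01 i with h | h <;> omega)).mp hz i (Finset.mem_univ i)
      omega
    have hvp0 : v p 0 = 0 := by rw [hap_eq, hEM, hTM]; ring
    have hvp1 : v p 1 = 0 := by linarith [hB]
    have hvp2 : v p 2 = M + 3 := by linarith [hC2]
    have hvp3 : v p 3 = -(M + 2) := by linarith [hD2]
    have hvq0 : v q 0 = -M := by rw [hEdef] at hEM; linarith [hrq]
    funext i j
    show w i j = 0
    rw [hw i j]
    rcases hcover i with ⟨i', rfl⟩ | rfl | rfl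
    · rw [hu_top i']
      have h0 := hAD i'
      have h1 := hbi i'
      have h2 := hci i'
      have h3 := hd1 i'
      fin_cases j
      · show (![1,-1,-1,1] : Fin 4 → ℤ) 0 - v (e i') 0 = 0
        simp only [Matrix.cons_val_zero]; omega
      · show (![1,-1,-1,1] : Fin 4 → ℤ) 1 - v (e i') 1 = 0
        simp only [Matrix.cons_val_one, Matrix.head_cons, Matrix.cons_val_zero]; omega
      · show (![1,-1,-1,1] : Fin 4 → ℤ) 2 - v (e i') 2 = 0
        simp only [Matrix.cons_val_two, Matrix.tail_cons, Matrix.head_cons]; omega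
      · show (![1,-1,-1,1] : Fin 4 → ℤ) 3 - v (e i') 3 = 0
        simp only [Matrix.cons_val_three, Matrix.tail_cons, Matrix.head_cons]; omega
    · rw [hu_p]
      fin_cases j
      · show (![0, 0, ((m:ℤ)+2) + 1, -((m:ℤ)+2)] : Fin 4 → ℤ) 0 - v p 0 = 0
        simp only [Matrix.cons_val_zero]; rw [hvp0]; ring
      · show (![0, 0, ((m:ℤ)+2) + 1, -((m:ℤ)+2)] : Fin 4 → ℤ) 1 - v p 1 = 0
        simp only [Matrix.cons_val_one, Matrix.head_cons, Matrix.cons_val_zero]; rw [hvp1]; ring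
      · show (![0, 0, ((m:ℤ)+2) + 1, -((m:ℤ)+2)] : Fin 4 → ℤ) 2 - v p 2 = 0
        simp only [Matrix.cons_val_two, Matrix.tail_cons, Matrix.head_cons]
        rw [hvp2, hMdef]; ring
      · show (![0, 0, ((m:ℤ)+2) + 1, -((m:ℤ)+2)] : Fin 4 → ℤ) 3 - v p 3 = 0
        simp only [Matrix.cons_val_three, Matrix.tail_cons, Matrix.head_cons]
        rw [hvp3, hMdef]; ring
    · rw [hu_q]
      fin_cases j
      · show (![2 - ((m:ℤ)+2), ((m:ℤ)+2) - 2, -3, 2] : Fin 4 → ℤ) 0 - v q 0 = 0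
        simp only [Matrix.cons_val_zero]; rw [hvq0, hMdef]; ring
      · show (![2 - ((m:ℤ)+2), ((m:ℤ)+2) - 2, -3, 2] : Fin 4 → ℤ) 1 - v q 1 = 0
        simp only [Matrix.cons_val_one, Matrix.head_cons, Matrix.cons_val_zero]; rw [hβM, hMdef]; ring
      · show (![2 - ((m:ℤ)+2), ((m:ℤ)+2) - 2, -3, 2] : Fin 4 → ℤ) 2 - v q 2 = 0
        simp only [Matrix.cons_val_two, Matrix.tail_cons, Matrix.head_cons]
        rw [hcq3]; ring
      · show (![2 - ((m:ℤ)+2), ((m:ℤ)+2) - 2, -3, 2] : Fin 4 → ℤ) 3 - v q 3 = 0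
        simp only [Matrix.cons_val_three, Matrix.tail_cons, Matrix.head_cons]
        rw [hdq]; ring
  · -- impossible
    exfalso
    have hdvd : (M+2) ∣ E + 1 := ⟨v q 1 + (M+1) * v q 2 + (M+2), by
      rw [hEdef, hdq]; ring⟩
    have hle := Int.le_of_dvd (by linarith) hdvd
    linarith
  · -- v = 0
    left
    have hdvd : (M+2) ∣ E := ⟨v q 1 + (M+1) * v q 2, by rw [hEdef, hdq]; ring⟩
    have hEz : E = 0 := by
      by_contra hcon
      have : 0 < E := by omega
      have := Int.le_of_dvd this hdvd
      linarith
    have hfac : (M+2) * (v q 1 + (M+1) * v q 2) = 0 := by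
      rw [hEdef, hdq] at hEz; linear_combination hEz
    have hfac2 : v q 1 + (M+1) * v q 2 = 0 := by
      rcases mul_eq_zero.mp hfac with h' | h'
      · exfalso; linarith
      · exact h'
    have hcq0 : v q 2 = 0 := by
      by_contra hcon
      have h1 : (1:ℤ) ≤ -(v q 2) := by omega
      have h2 : (M+1) * 1 ≤ (M+1) * (-(v q 2)) :=
        mul_le_mul_of_nonneg_left h1 (by linarith)
      have : v q 1 = (M+1) * (-(v q 2)) := by linarith [hfac2]
      linarith [hq1]
    have hβ0 : v q 1 = 0 := by rw [hcq0] at hfac2; linarith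
    have hT00 : T = 0 := by linarith
    have hdall : ∀ i : Fin m, v (e i) 3 = 0 := by
      have hz : ∑ i : Fin m, v (e i) 3 = 0 := by rw [← hTdef]; exact hT00
      intro i
      exact (Finset.sum_eq_zero_iff_of_nonneg
        (fun i _ => by rcases hD01 i with h | h <;> omega)).mp hz i (Finset.mem_univ i)
    have hvp0 : v p 0 = 0 := by rw [hap_eq, hEz, hT00]; ring
    have hvp1 : v p 1 = 0 := by linarith [hB]
    have hvp2 : v p 2 = 0 := by linarith [hC2]
    have hvp3 : v p 3 = 0 := by linarith [hD2]
    have hvq0 : v q 0 = 0 := by rw [hEdef] at hEz; linarith [hrq]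
    funext i j
    show v i j = 0
    rcases hcover i with ⟨i', rfl⟩ | rfl | rfl
    · have h0 := hAD i'
      have h1 := hbi i'
      have h2 := hci i'
      have h3 := hdall i'
      fin_cases j
      · show v (e i') 0 = 0; omega
      · show v (e i') 1 = 0; omega
      · show v (e i') 2 = 0; omega
      · show v (e i') 3 = 0; omega
    · fin_cases j
      · show v p 0 = 0; exact hvp0
      · show v p 1 = 0; exact hvp1
      · show v p 2 = 0; exact hvp2
      · show v p 3 = 0; exact hvp3
    · fin_cases j
      · show v q 0 = 0; exact hvq0
      · show v q 1 = 0; exact hβ0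
      · show v q 2 = 0; exact hcq0
      · show v q 3 = 0; exact hdq
  · -- impossible
    exfalso
    have h1 : (M+2) * (v q 1) ≤ (M+2) * M := mul_le_mul_of_nonneg_left hq1 (by linarith)
    have h2 : ((M+2)^2 - (M+2)) * v q 2 ≤ 0 := by
      have := mul_nonneg (show (0:ℤ) ≤ (M+2)^2 - (M+2) by linarith [sq_nonneg M]) (show (0:ℤ) ≤ -(v q 2) by linarith)
      linarith
    have h3 : ((M+2)^2 - 1) * v q 3 ≤ ((M+2)^2 - 1) * (-1) :=
      mul_le_mul_of_nonneg_left hdq (by linarith [sq_nonneg M])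
    rw [hEdef] at hE0
    linarith [sq_nonneg M]
end

section
/- Let n ≥ 2. There is no decomposition (1,−1,−1,1) = v + w with v, w ∈ ker of x ↦ x₁ + n·x₂ + (n²−n)·x₃ + (n²−1)·x₄, both v and w nonzero, satisfying (1,−1,−1,1)⁺ = v⁺ + w⁺ and (1,−1,−1,1)⁻ = v⁻ + w⁻. That is, (1,−1,−1,1) belongs to the Graver basis of A = (1, n, n²−n, n²−1). -/
set_option maxHeartbeats 1600000 in
theorem stmt_19 (n : ℕ) (hn : 2 ≤ n) :
    ¬ ∃ v w : Fin 4 → ℤ,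
      (v 0 + n * v 1 + ((n : ℤ) ^ 2 - n) * v 2 + ((n : ℤ) ^ 2 - 1) * v 3 = 0) ∧
      (w 0 + n * w 1 + ((n : ℤ) ^ 2 - n) * w 2 + ((n : ℤ) ^ 2 - 1) * w 3 = 0) ∧
      v ≠ 0 ∧ w ≠ 0 ∧
      (![1, -1, -1, 1] : Fin 4 → ℤ) = v + w ∧
      (∀ i, max ((![1, -1, -1, 1] : Fin 4 → ℤ) i) 0 = max (v i) 0 + max (w i) 0) ∧
      (∀ i, max (-((![1, -1, -1, 1] : Fin 4 → ℤ) i)) 0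
        = max (-(v i)) 0 + max (-(w i)) 0) := by
  rintro ⟨v, w, hv, hw, hv0, hw0, hvw, hp, hm⟩
  have hN : (2 : ℤ) ≤ (n : ℤ) := by exact_mod_cast hn
  have e0 := congrFun hvw 0
  have e1 := congrFun hvw 1
  have e2 := congrFun hvw 2
  have e3 := congrFun hvw 3
  simp [Pi.add_apply] at e0 e1 e2 e3
  have p0 := hp 0; have p1 := hp 1; have p2 := hp 2; have p3 := hp 3
  have m0 := hm 0; have m1 := hm 1; have m2 := hm 2; have m3 := hm 3
  simp at p0 p1 p2 p3 m0 m1 m2 m3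
  have c0 : v 0 = 0 ∨ v 0 = 1 := by omega
  have c1 : v 1 = 0 ∨ v 1 = -1 := by omega
  have c2 : v 2 = 0 ∨ v 2 = -1 := by omega
  have c3 : v 3 = 0 ∨ v 3 = 1 := by omega
  have hvz : ¬ (v 0 = 0 ∧ v 1 = 0 ∧ v 2 = 0 ∧ v 3 = 0) := by
    rintro ⟨a, b, c, d⟩
    apply hv0
    funext i
    fin_cases i <;> simpa
  have hwz : ¬ (w 0 = 0 ∧ w 1 = 0 ∧ w 2 = 0 ∧ w 3 = 0) := by
    rintro ⟨a, b, c, d⟩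
    apply hw0
    funext i
    fin_cases i <;> simpa
  rcases c0 with h0 | h0 <;> rcases c1 with h1 | h1 <;>
    rcases c2 with h2 | h2 <;> rcases c3 with h3 | h3 <;>
    rw [h0, h1, h2, h3] at hv <;>
    first
      | exact hvz ⟨h0, h1, h2, h3⟩
      | exact hwz ⟨by omega, by omega, by omega, by omega⟩
      | nlinarith [hv, hN, sq_nonneg ((n : ℤ) - 1)]
end
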